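/- arXiv:math/0408327 — 3 statements merged into one kernel-verified Lean document; each statement's English description precedes it below -/
import Mathlib

section
/- Let Y be a random variable with P(Y > s) ≤ C e^{-D s^q} for all s > 0 (C, D > 0, q > 1). Fix L > 0. Then there exist constants C_{M,L} > 0 with C_{M,L} → 0 as M → ∞ such that for every M > 0 and every real b ≥ 1, E[((Y - M b)⁺)^{L b^q}]^{1/(L b^q)} ≤ b · C_{M,L}. -/
open MeasureTheory

/-- superadditivity of `x ^ p` for `p ≥ 1`. -/
lemma rpow_superadd {x y p : ℝ} (hx : 0 ≤ x) (hy : 0 ≤ y) (hp : 1 ≤ p) :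
    x ^ p + y ^ p ≤ (x + y) ^ p := by
  lift x to NNReal using hx
  lift y to NNReal using hy
  have := NNReal.add_rpow_le_rpow_add x y hp
  have h' : ((x ^ p + y ^ p : NNReal) : ℝ) ≤ (((x + y) ^ p : NNReal) : ℝ) := by
    exact_mod_cast this
  simpa [NNReal.coe_rpow] using h'

/-- summability helper. -/
lemma summable_kexp {c q : ℝ} (hc : 0 < c) (hq : 1 ≤ q) :
    Summable (fun k : ℕ => ((k : ℝ) + 1) * Real.exp (-c * (k : ℝ) ^ q)) := by
  have hx : |Real.exp (-c)| < 1 := by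
    rw [abs_of_pos (Real.exp_pos _)]
    exact Real.exp_lt_one_iff.mpr (by linarith)
  have hsum : Summable (fun k : ℕ => ((k : ℝ) + 1) * Real.exp (-c) ^ k) := by
    have h1 : Summable (fun k : ℕ => (k : ℝ) ^ 1 * Real.exp (-c) ^ k) :=
      summable_pow_mul_geometric_of_norm_lt_one 1 (by simpa [Real.norm_eq_abs] using hx)
    have h2 : Summable (fun k : ℕ => Real.exp (-c) ^ k) :=
      summable_geometric_of_lt_one (Real.exp_pos _).le
        (Real.exp_lt_one_iff.mpr (by linarith))
    have := h1.add h2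
    refine this.congr fun k => by ring_nf
  refine Summable.of_nonneg_of_le (fun k => ?_) (fun k => ?_) hsum
  · positivity
  · have hk : (k : ℝ) ≤ (k : ℝ) ^ q := by
      rcases Nat.eq_zero_or_pos k with hk0 | hk0
      · subst hk0; simp [Real.zero_rpow (by linarith : q ≠ 0)]
      · have h1k : (1 : ℝ) ≤ (k : ℝ) := by exact_mod_cast hk0
        calc (k : ℝ) = (k : ℝ) ^ (1 : ℝ) := (Real.rpow_one _).symm
          _ ≤ (k : ℝ) ^ q := Real.rpow_le_rpow_of_exponent_le h1k hq
    have : Real.exp (-c * (k : ℝ) ^ q) ≤ Real.exp (-c) ^ k := by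
      rw [← Real.exp_nat_mul]
      refine Real.exp_le_exp.mpr ?_
      nlinarith
    have hk1 : (0 : ℝ) ≤ (k : ℝ) + 1 := by positivity
    exact mul_le_mul_of_nonneg_left this hk1

/-- Truncated-moment bound: under the tail assumption `P(Y > s) ≤ C e^{-D s^q}`, for fixed
`L > 0` there are constants `C_{M,L} → 0` (as `M → ∞`) with
`E[((Y - Mb)⁺)^{L b^q}]^{1/(L b^q)} ≤ b C_{M,L}` for all `M > 0`, `b ≥ 1`. -/
theorem truncated_moment_bound
    {Ω : Type*} [MeasurableSpace Ω] (P : Measure Ω) [IsProbabilityMeasure P]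
    (Y : Ω → ℝ) (hY : Measurable Y)
    (C D q L : ℝ) (hC : 0 < C) (hD : 0 < D) (hq : 1 < q) (hL : 0 < L)
    (htail : ∀ s : ℝ, 0 < s → (P {ω | s < Y ω}).toReal ≤ C * Real.exp (-D * s ^ q)) :
    ∃ Cc : ℝ → ℝ, (∀ M : ℝ, 0 < M → 0 < Cc M) ∧
      Filter.Tendsto Cc Filter.atTop (nhds 0) ∧
      ∀ M b : ℝ, 0 < M → 1 ≤ b →
        (∫ ω, (max (Y ω - M * b) 0) ^ (L * b ^ q) ∂P) ^ (1 / (L * b ^ q)) ≤ b * Cc M := by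
  classical
  set r : ℝ := min L 1 with hr_def
  have hr0 : 0 < r := lt_min hL one_pos
  have hr1 : r ≤ 1 := min_le_right _ _
  have hrL : r ≤ L := min_le_left _ _
  set a : ℕ → ℝ := fun k => ((k : ℝ) + 1) * Real.exp (-(D / L) * (k : ℝ) ^ q) with ha_def
  have ha_pos : ∀ k, 0 < a k := fun k => by
    simp only [ha_def]; positivity
  have hsa : Summable a := summable_kexp (by positivity) hq.le
  have hsar : Summable (fun k => a k ^ r) := by
    refine Summable.of_nonneg_of_le (fun k => (Real.rpow_nonneg (ha_pos k).le r))
      (fun k => ?_) (summable_kexp (c := r * (D / L)) (by positivity) hq.le)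
    have h1 : a k ^ r = ((k : ℝ) + 1) ^ r * Real.exp (-(r * (D / L)) * (k : ℝ) ^ q) := by
      rw [ha_def]
      rw [Real.mul_rpow (by positivity) (Real.exp_pos _).le, ← Real.exp_mul]
      ring_nf
    rw [h1]
    have h2 : ((k : ℝ) + 1) ^ r ≤ (k : ℝ) + 1 := by
      calc ((k : ℝ) + 1) ^ r ≤ ((k : ℝ) + 1) ^ (1 : ℝ) :=
            Real.rpow_le_rpow_of_exponent_le (by simp) hr1
        _ = (k : ℝ) + 1 := Real.rpow_one _
    exact mul_le_mul_of_nonneg_right h2 (Real.exp_pos _).le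
  set Asup : ℝ := max (∑' k, a k) 1 with hAsup_def
  have hAsup1 : (1 : ℝ) ≤ Asup := le_max_right _ _
  have ha_le : ∀ k, a k ≤ Asup := fun k =>
    le_trans (Summable.le_tsum hsa k (fun j _ => (ha_pos j).le)) (le_max_left _ _)
  set T : ℝ := ∑' k, a k ^ r with hT_def
  set T' : ℝ := max T 1 with hT'_def
  have hT'1 : (1 : ℝ) ≤ T' := le_max_right _ _
  set K : ℝ := max C 1 ^ (1 / L) * Asup * T' ^ (1 / L) with hK_def
  have hK_pos : 0 < K := by
    have h1 : (0:ℝ) < max C 1 ^ (1 / L) := Real.rpow_pos_of_pos (lt_max_of_lt_right one_pos) _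
    have h2 : (0:ℝ) < T' ^ (1 / L) := Real.rpow_pos_of_pos (by linarith) _
    have := hAsup1
    positivity
  refine ⟨fun M => K * Real.exp (-(D / L) * M ^ q), fun M _ => by positivity, ?_, ?_⟩
  · -- tendsto 0
    have h1 : Filter.Tendsto (fun M : ℝ => M ^ q) Filter.atTop Filter.atTop :=
      tendsto_rpow_atTop (by linarith)
    have h2 : Filter.Tendsto (fun M : ℝ => -(D / L) * M ^ q) Filter.atTop Filter.atBot :=
      (h1.const_mul_atTop_of_neg (neg_lt_zero.mpr (by positivity))).mono_right le_rfl
    have h3 : Filter.Tendsto (fun M : ℝ => Real.exp (-(D / L) * M ^ q))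
        Filter.atTop (nhds 0) := Real.tendsto_exp_atBot.comp h2
    simpa using (tendsto_const_nhds (x := K)).mul h3
  · intro M b hM hb
    have hb0 : (0 : ℝ) < b := lt_of_lt_of_le one_pos hb
    have hbq1 : (1 : ℝ) ≤ b ^ q := Real.one_le_rpow hb (by linarith)
    have hbq0 : (0 : ℝ) < b ^ q := by linarith
    set p : ℝ := L * b ^ q with hp_def
    have hpL : L ≤ p := by nlinarith
    have hp0 : 0 < p := by positivity
    have hp1q : 1 / p ≤ 1 / L := one_div_le_one_div_of_le hL hpL
    -- the integrand
    set f : Ω → ℝ := fun ω => (max (Y ω - M * b) 0) ^ p with hf_def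
    have hf_nonneg : ∀ ω, 0 ≤ f ω := fun ω =>
      Real.rpow_nonneg (le_max_right _ _) _
    have hXm : Measurable fun ω => max (Y ω - M * b) 0 :=
      (hY.sub measurable_const).max measurable_const
    have hfm : AEStronglyMeasurable f P :=
      ((Real.continuous_rpow_const hp0.le).measurable.comp hXm).aestronglyMeasurable
    rw [integral_eq_lintegral_of_nonneg_ae (Filter.Eventually.of_forall hf_nonneg) hfm]
    -- sets and layers
    set s : ℕ → Set Ω := fun k => {ω | (M + (k : ℝ)) * b < Y ω} with hs_def
    have hs_meas : ∀ k, MeasurableSet (s k) := fun k =>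
      measurableSet_lt measurable_const hY
    set g : ℕ → Ω → ENNReal := fun k =>
      (s k).indicator (fun _ => ENNReal.ofReal ((((k : ℝ) + 1) * b) ^ p)) with hg_def
    -- pointwise bound
    have key : ∀ ω, ENNReal.ofReal (f ω) ≤ ∑' k, g k ω := by
      intro ω
      rcases le_or_gt (Y ω) (M * b) with hYle | hYgt
      · have : f ω = 0 := by
          rw [hf_def]
          simp only
          rw [max_eq_right (by linarith), Real.zero_rpow hp0.ne']
        simp [this]
      · set X : ℝ := Y ω - M * b with hX_def
        have hX0 : 0 < X := by simp [hX_def]; linarith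
        set n : ℕ := ⌈X / b⌉₊ with hn_def
        have hn1 : 1 ≤ n := Nat.one_le_ceil_iff.mpr (by positivity)
        set k : ℕ := n - 1 with hk_def
        have hkn : ((k : ℝ) + 1) = (n : ℝ) := by
          rw [hk_def]
          push_cast [Nat.cast_sub hn1]
          ring
        have hklt : (k : ℝ) < X / b := by
          refine Nat.lt_ceil.mp ?_
          rw [← hn_def]
          omega
        have hkub : X ≤ ((k : ℝ) + 1) * b := by
          rw [hkn]
          have := Nat.le_ceil (X / b)
          calc X = X / b * b := by field_simp
            _ ≤ (n : ℝ) * b := by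
              exact mul_le_mul_of_nonneg_right (by exact_mod_cast this) hb0.le
        have hmem : ω ∈ s k := by
          rw [hs_def]
          simp only [Set.mem_setOf_eq]
          have h1 : (k : ℝ) * b < X := (lt_div_iff₀ hb0).mp hklt
          have : (M + (k : ℝ)) * b = M * b + (k : ℝ) * b := by ring
          rw [this]
          linarith [hX_def ▸ h1]
        have hfX : f ω = X ^ p := by
          rw [hf_def]
          simp only
          rw [max_eq_left hX0.le]
        calc ENNReal.ofReal (f ω) ≤ ENNReal.ofReal ((((k : ℝ) + 1) * b) ^ p) := by
              rw [hfX]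
              exact ENNReal.ofReal_le_ofReal (Real.rpow_le_rpow hX0.le hkub hp0.le)
          _ = g k ω := by rw [hg_def]; simp [Set.indicator_of_mem hmem]
          _ ≤ ∑' j, g j ω := ENNReal.le_tsum k
    -- termwise tail bound, pure real
    set v : ℕ → ℝ := fun k =>
      C * Real.exp (-D * M ^ q * b ^ q) * b ^ p * Asup ^ (p - r) * a k ^ r with hv_def
    have hv_nonneg : ∀ k, 0 ≤ v k := by
      intro k
      have h1 : (0:ℝ) ≤ b ^ p := (Real.rpow_pos_of_pos hb0 p).le
      have h2 : (0:ℝ) ≤ Asup ^ (p - r) := (Real.rpow_pos_of_pos (by linarith) _).le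
      have h3 : (0:ℝ) ≤ a k ^ r := (Real.rpow_pos_of_pos (ha_pos k) _).le
      positivity
    have hterm : ∀ k : ℕ,
        (((k : ℝ) + 1) * b) ^ p * (C * Real.exp (-D * ((M + (k : ℝ)) * b) ^ q)) ≤ v k := by
      intro k
      have hk0 : (0 : ℝ) ≤ (k : ℝ) := Nat.cast_nonneg k
      have hMk : (0 : ℝ) < M + (k : ℝ) := by linarith
      -- superadditivity of rpow
      have hsup : M ^ q + (k : ℝ) ^ q ≤ (M + (k : ℝ)) ^ q :=
        rpow_superadd hM.le hk0 hq.le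
      have e1 : ((M + (k : ℝ)) * b) ^ q = (M + (k : ℝ)) ^ q * b ^ q :=
        Real.mul_rpow hMk.le hb0.le
      have e2 : Real.exp (-D * ((M + (k : ℝ)) * b) ^ q) ≤
          Real.exp (-D * M ^ q * b ^ q) * Real.exp (-D * (k : ℝ) ^ q * b ^ q) := by
        rw [← Real.exp_add]
        refine Real.exp_le_exp.mpr ?_
        rw [e1]
        nlinarith [mul_le_mul_of_nonneg_left hsup (mul_pos hD hbq0).le]
      have e3 : (((k : ℝ) + 1) * b) ^ p = ((k : ℝ) + 1) ^ p * b ^ p :=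
        Real.mul_rpow (by positivity) hb0.le
      have e4 : ((k : ℝ) + 1) ^ p * Real.exp (-D * (k : ℝ) ^ q * b ^ q) = a k ^ p := by
        rw [ha_def]
        simp only
        rw [Real.mul_rpow (by positivity) (Real.exp_pos _).le, ← Real.exp_mul]
        congr 2
        rw [hp_def]
        field_simp
      have e5 : a k ^ p ≤ Asup ^ (p - r) * a k ^ r := by
        have : a k ^ p = a k ^ (p - r) * a k ^ r := by
          rw [← Real.rpow_add (ha_pos k)]; ring_nf
        rw [this]
        refine mul_le_mul_of_nonneg_right ?_ (Real.rpow_nonneg (ha_pos k).le r)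
        exact Real.rpow_le_rpow (ha_pos k).le (ha_le k) (by linarith)
      calc (((k : ℝ) + 1) * b) ^ p * (C * Real.exp (-D * ((M + (k : ℝ)) * b) ^ q))
          ≤ ((k : ℝ) + 1) ^ p * b ^ p *
            (C * (Real.exp (-D * M ^ q * b ^ q) * Real.exp (-D * (k : ℝ) ^ q * b ^ q))) := by
            rw [e3]
            refine mul_le_mul_of_nonneg_left ?_ (by positivity)
            exact mul_le_mul_of_nonneg_left e2 hC.le
        _ = C * Real.exp (-D * M ^ q * b ^ q) * b ^ p *
            (((k : ℝ) + 1) ^ p * Real.exp (-D * (k : ℝ) ^ q * b ^ q)) := by ring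
        _ = C * Real.exp (-D * M ^ q * b ^ q) * b ^ p * a k ^ p := by rw [e4]
        _ ≤ v k := by
            rw [hv_def]
            simp only
            have hcc : (0:ℝ) ≤ C * Real.exp (-D * M ^ q * b ^ q) * b ^ p := by
              have := (Real.rpow_pos_of_pos hb0 p).le
              positivity
            calc C * Real.exp (-D * M ^ q * b ^ q) * b ^ p * a k ^ p
                ≤ C * Real.exp (-D * M ^ q * b ^ q) * b ^ p * (Asup ^ (p - r) * a k ^ r) :=
                  mul_le_mul_of_nonneg_left e5 hcc
              _ = C * Real.exp (-D * M ^ q * b ^ q) * b ^ p * Asup ^ (p - r) * a k ^ r := by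
                  ring
    -- bound the lintegral
    set B : ℝ := C * Real.exp (-D * M ^ q * b ^ q) * b ^ p * Asup ^ (p - r) * T' with hB_def
    have hB_nonneg : 0 ≤ B := by
      have h1 : (0:ℝ) ≤ b ^ p := (Real.rpow_pos_of_pos hb0 p).le
      have h2 : (0:ℝ) ≤ Asup ^ (p - r) := (Real.rpow_pos_of_pos (by linarith) _).le
      have := hT'1
      positivity
    have hlint : (∫⁻ ω, ENNReal.ofReal (f ω) ∂P) ≤ ENNReal.ofReal B := by
      calc (∫⁻ ω, ENNReal.ofReal (f ω) ∂P) ≤ ∫⁻ ω, ∑' k, g k ω ∂P :=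
            lintegral_mono key
        _ = ∑' k, ∫⁻ ω, g k ω ∂P :=
            lintegral_tsum (fun k => (measurable_const.indicator (hs_meas k)).aemeasurable)
        _ = ∑' k : ℕ, ENNReal.ofReal (((((k : ℕ) : ℝ) + 1) * b) ^ p) * P (s k) := by
            refine tsum_congr fun k => ?_
            rw [hg_def]
            simp only
            rw [lintegral_indicator (hs_meas k)]
            simp [Measure.restrict_apply (hs_meas k)]
        _ ≤ ∑' k, ENNReal.ofReal (v k) := by
            refine ENNReal.tsum_le_tsum fun k => ?_
            have hk0 : (0 : ℝ) ≤ (k : ℝ) := Nat.cast_nonneg k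
            have hMk : (0 : ℝ) < (M + (k : ℝ)) * b := by
              have : (0:ℝ) < M + (k : ℝ) := by linarith
              positivity
            have htk : P (s k) ≤ ENNReal.ofReal (C * Real.exp (-D * ((M + (k : ℝ)) * b) ^ q)) := by
              refine (ENNReal.le_ofReal_iff_toReal_le (measure_ne_top P _) (by positivity)).mpr ?_
              exact htail _ hMk
            calc ENNReal.ofReal ((((k : ℝ) + 1) * b) ^ p) * P (s k)
                ≤ ENNReal.ofReal ((((k : ℝ) + 1) * b) ^ p) *
                  ENNReal.ofReal (C * Real.exp (-D * ((M + (k : ℝ)) * b) ^ q)) :=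
                  mul_le_mul_right htk _
              _ = ENNReal.ofReal ((((k : ℝ) + 1) * b) ^ p *
                  (C * Real.exp (-D * ((M + (k : ℝ)) * b) ^ q))) :=
                  (ENNReal.ofReal_mul (Real.rpow_nonneg (by positivity) p)).symm
              _ ≤ ENNReal.ofReal (v k) := ENNReal.ofReal_le_ofReal (hterm k)
        _ = ENNReal.ofReal (∑' k, v k) := by
            rw [ENNReal.ofReal_tsum_of_nonneg hv_nonneg]
            exact (hsar.mul_left _)
        _ ≤ ENNReal.ofReal B := by
            refine ENNReal.ofReal_le_ofReal ?_
            have hsum : (∑' k, v k) = C * Real.exp (-D * M ^ q * b ^ q) * b ^ p *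
                Asup ^ (p - r) * T := by
              rw [hv_def, hT_def]
              simpa using tsum_mul_left
                (a := C * Real.exp (-D * M ^ q * b ^ q) * b ^ p * Asup ^ (p - r))
                (f := fun k => a k ^ r)
            rw [hsum, hB_def]
            have hTle : T ≤ T' := le_max_left _ _
            have h1 : (0:ℝ) ≤ b ^ p := (Real.rpow_pos_of_pos hb0 p).le
            have h2 : (0:ℝ) ≤ Asup ^ (p - r) := (Real.rpow_pos_of_pos (by linarith) _).le
            have hcc : (0:ℝ) ≤ C * Real.exp (-D * M ^ q * b ^ q) * b ^ p * Asup ^ (p - r) := by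
              positivity
            exact mul_le_mul_of_nonneg_left hTle hcc
    have hto : (∫⁻ ω, ENNReal.ofReal (f ω) ∂P).toReal ≤ B :=
      ENNReal.toReal_le_of_le_ofReal hB_nonneg hlint
    -- take the 1/p power
    have hroot : ((∫⁻ ω, ENNReal.ofReal (f ω) ∂P).toReal) ^ (1 / p) ≤ B ^ (1 / p) :=
      Real.rpow_le_rpow ENNReal.toReal_nonneg hto (by positivity)
    refine hroot.trans ?_
    -- final real computation: B^(1/p) ≤ b * K * exp(-(D/L) M^q)
    have hE : Real.exp (-D * M ^ q * b ^ q) ^ (1 / p) = Real.exp (-(D / L) * M ^ q) := by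
      rw [← Real.exp_mul]
      congr 1
      rw [hp_def]
      field_simp
    have hBsplit : B ^ (1 / p) = C ^ (1 / p) * Real.exp (-(D / L) * M ^ q) *
        b * Asup ^ ((p - r) * (1 / p)) * T' ^ (1 / p) := by
      rw [hB_def]
      have h1 : (0:ℝ) ≤ C := hC.le
      have h2 : (0:ℝ) ≤ Real.exp (-D * M ^ q * b ^ q) := (Real.exp_pos _).le
      have h3 : (0:ℝ) ≤ b ^ p := (Real.rpow_pos_of_pos hb0 p).le
      have h4 : (0:ℝ) ≤ Asup ^ (p - r) := (Real.rpow_pos_of_pos (by linarith) _).le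
      rw [Real.mul_rpow (by positivity) (by linarith : (0:ℝ) ≤ T'),
        Real.mul_rpow (by positivity) h4,
        Real.mul_rpow (by positivity) h3,
        Real.mul_rpow h1 h2, hE]
      rw [← Real.rpow_mul hb0.le, ← Real.rpow_mul (by linarith : (0:ℝ) ≤ Asup)]
      rw [mul_one_div, div_self hp0.ne', Real.rpow_one]
    rw [hBsplit]
    have hCle : C ^ (1 / p) ≤ max C 1 ^ (1 / L) := by
      calc C ^ (1 / p) ≤ max C 1 ^ (1 / p) :=
            Real.rpow_le_rpow hC.le (le_max_left _ _) (by positivity)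
        _ ≤ max C 1 ^ (1 / L) :=
            Real.rpow_le_rpow_of_exponent_le (le_max_right _ _) hp1q
    have hAle : Asup ^ ((p - r) * (1 / p)) ≤ Asup := by
      calc Asup ^ ((p - r) * (1 / p)) ≤ Asup ^ (1 : ℝ) := by
            refine Real.rpow_le_rpow_of_exponent_le hAsup1 ?_
            rw [mul_one_div, div_le_one hp0]
            linarith
        _ = Asup := Real.rpow_one _
    have hTle : T' ^ (1 / p) ≤ T' ^ (1 / L) :=
      Real.rpow_le_rpow_of_exponent_le hT'1 hp1q
    have hfinal : C ^ (1 / p) * Real.exp (-(D / L) * M ^ q) * b *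
        Asup ^ ((p - r) * (1 / p)) * T' ^ (1 / p) ≤
        max C 1 ^ (1 / L) * Real.exp (-(D / L) * M ^ q) * b * Asup * T' ^ (1 / L) := by
      have e0 : (0:ℝ) ≤ Real.exp (-(D / L) * M ^ q) := (Real.exp_pos _).le
      have e1 : (0:ℝ) ≤ C ^ (1 / p) := Real.rpow_nonneg hC.le _
      have e2 : (0:ℝ) ≤ Asup ^ ((p - r) * (1 / p)) := Real.rpow_nonneg (by linarith) _
      have e3 : (0:ℝ) ≤ T' ^ (1 / p) := Real.rpow_nonneg (by linarith) _
      have e4 : (0:ℝ) ≤ max C 1 ^ (1 / L) := Real.rpow_nonneg (le_trans zero_le_one (le_max_right _ _)) _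
      have n1 : (0:ℝ) ≤ max C 1 ^ (1 / L) * Real.exp (-(D / L) * M ^ q) := mul_nonneg e4 e0
      have n2 : (0:ℝ) ≤ max C 1 ^ (1 / L) * Real.exp (-(D / L) * M ^ q) * b :=
        mul_nonneg n1 hb0.le
      have n3 : (0:ℝ) ≤ max C 1 ^ (1 / L) * Real.exp (-(D / L) * M ^ q) * b * Asup :=
        mul_nonneg n2 (by linarith)
      have h3 : C ^ (1 / p) * Real.exp (-(D / L) * M ^ q) ≤
          max C 1 ^ (1 / L) * Real.exp (-(D / L) * M ^ q) :=
        mul_le_mul_of_nonneg_right hCle e0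
      have h2 : C ^ (1 / p) * Real.exp (-(D / L) * M ^ q) * b ≤
          max C 1 ^ (1 / L) * Real.exp (-(D / L) * M ^ q) * b :=
        mul_le_mul_of_nonneg_right h3 hb0.le
      have h1 : C ^ (1 / p) * Real.exp (-(D / L) * M ^ q) * b * Asup ^ ((p - r) * (1 / p)) ≤
          max C 1 ^ (1 / L) * Real.exp (-(D / L) * M ^ q) * b * Asup :=
        mul_le_mul h2 hAle e2 n2
      exact mul_le_mul h1 hTle e3 n3
    refine hfinal.trans (le_of_eq ?_)
    rw [hK_def]
    ring
end

section
/- For d ∈ ℕ and p > 0, define χ_{d,p} = inf{ (1/2)‖∇ψ‖₂² : ψ ∈ H¹(ℝ^d), ‖ψ‖₂ = 1, ‖ψ‖_{2p} = 1 }. Then χ_{2d,p} ≤ 2 χ_{d,p}. -/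
open MeasureTheory

/-- Squared norm of the gradient of `ψ` at `x`. -/
noncomputable def gradNormSq {d : ℕ} (ψ : (Fin d → ℝ) → ℝ) (x : Fin d → ℝ) : ℝ :=
  ∑ i, (fderiv ℝ ψ x (Pi.single i 1)) ^ 2

/-- The set of values `(1/2)‖∇ψ‖₂²` over `ψ ∈ H¹(ℝ^d)` with `‖ψ‖₂ = 1 = ‖ψ‖_{2p}`;
`χ_{d,p}` is its infimum. -/
def chiSet (d : ℕ) (p : ℝ) : Set ℝ :=
  {E | ∃ ψ : (Fin d → ℝ) → ℝ, Differentiable ℝ ψ ∧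
    Integrable (fun x => ψ x ^ 2) ∧ Integrable (gradNormSq ψ) ∧
    Integrable (fun x => |ψ x| ^ (2 * p)) ∧
    (∫ x, ψ x ^ 2) = 1 ∧ (∫ x, |ψ x| ^ (2 * p)) = 1 ∧
    E = (1 / 2) * ∫ x, gradNormSq ψ x}

/-! ### Auxiliary material -/

lemma chiSet_nonneg {d : ℕ} {p : ℝ} {E : ℝ} (hE : E ∈ chiSet d p) : 0 ≤ E := by
  obtain ⟨ψ, -, -, -, -, -, -, rfl⟩ := hE
  have h : 0 ≤ ∫ x, gradNormSq ψ x :=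
    integral_nonneg fun x => Finset.sum_nonneg fun i _ => sq_nonneg _
  linarith

/-- The index equivalence `Fin d ⊕ Fin d ≃ Fin (2*d)`. -/
def sigmaE (d : ℕ) : (Fin d ⊕ Fin d) ≃ Fin (2 * d) :=
  finSumFinEquiv.trans (finCongr (two_mul d).symm)

/-- The measurable equivalence `ℝ^d × ℝ^d ≃ ℝ^(2d)`. -/
noncomputable def eqvE (d : ℕ) : ((Fin d → ℝ) × (Fin d → ℝ)) ≃ᵐ (Fin (2 * d) → ℝ) :=
  (MeasurableEquiv.sumPiEquivProdPi (fun _ : Fin d ⊕ Fin d => ℝ)).symm.trans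
    (MeasurableEquiv.piCongrLeft (fun _ => ℝ) (sigmaE d))

lemma eqvE_measurePreserving (d : ℕ) : MeasurePreserving (eqvE d) volume volume :=
  (volume_measurePreserving_piCongrLeft (fun _ : Fin (2 * d) => ℝ) (sigmaE d)).comp
    (volume_measurePreserving_sumPiEquivProdPi_symm (fun _ : Fin d ⊕ Fin d => ℝ))

/-- Left projection `ℝ^(2d) → ℝ^d`. -/
noncomputable def projL (d : ℕ) : (Fin (2 * d) → ℝ) →L[ℝ] (Fin d → ℝ) :=
  ContinuousLinearMap.pi fun i => ContinuousLinearMap.proj (sigmaE d (Sum.inl i))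

/-- Right projection `ℝ^(2d) → ℝ^d`. -/
noncomputable def projR (d : ℕ) : (Fin (2 * d) → ℝ) →L[ℝ] (Fin d → ℝ) :=
  ContinuousLinearMap.pi fun i => ContinuousLinearMap.proj (sigmaE d (Sum.inr i))

lemma eqvE_apply (d : ℕ) (yz : (Fin d → ℝ) × (Fin d → ℝ)) (s : Fin d ⊕ Fin d) :
    eqvE d yz (sigmaE d s) = Sum.elim yz.1 yz.2 s := by
  show (MeasurableEquiv.piCongrLeft (fun _ => ℝ) (sigmaE d))
      ((MeasurableEquiv.sumPiEquivProdPi (fun _ : Fin d ⊕ Fin d => ℝ)).symm yz) (sigmaE d s)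
      = Sum.elim yz.1 yz.2 s
  rw [MeasurableEquiv.coe_piCongrLeft, Equiv.piCongrLeft_apply_apply]
  rfl

lemma projL_eqvE (d : ℕ) (yz : (Fin d → ℝ) × (Fin d → ℝ)) : projL d (eqvE d yz) = yz.1 := by
  funext i
  exact eqvE_apply d yz (Sum.inl i)

lemma projR_eqvE (d : ℕ) (yz : (Fin d → ℝ) × (Fin d → ℝ)) : projR d (eqvE d yz) = yz.2 := by
  funext i
  exact eqvE_apply d yz (Sum.inr i)

lemma projL_apply (d : ℕ) (v : Fin (2 * d) → ℝ) (k : Fin d) :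
    projL d v k = v (sigmaE d (Sum.inl k)) := rfl

lemma projR_apply (d : ℕ) (v : Fin (2 * d) → ℝ) (k : Fin d) :
    projR d v k = v (sigmaE d (Sum.inr k)) := rfl

lemma projL_single_inl (d : ℕ) (i : Fin d) :
    projL d (Pi.single (sigmaE d (Sum.inl i)) 1) = Pi.single i 1 := by
  funext k
  rw [projL_apply]
  rcases eq_or_ne k i with rfl | hk
  · simp
  · rw [Pi.single_eq_of_ne (by simp [hk]), Pi.single_eq_of_ne hk]

lemma projL_single_inr (d : ℕ) (i : Fin d) :
    projL d (Pi.single (sigmaE d (Sum.inr i)) 1) = 0 := by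
  funext k
  rw [projL_apply]
  rw [Pi.single_eq_of_ne (by simp)]
  rfl

lemma projR_single_inr (d : ℕ) (i : Fin d) :
    projR d (Pi.single (sigmaE d (Sum.inr i)) 1) = Pi.single i 1 := by
  funext k
  rw [projR_apply]
  rcases eq_or_ne k i with rfl | hk
  · simp
  · rw [Pi.single_eq_of_ne (by simp [hk]), Pi.single_eq_of_ne hk]

lemma projR_single_inl (d : ℕ) (i : Fin d) :
    projR d (Pi.single (sigmaE d (Sum.inl i)) 1) = 0 := by
  funext k
  rw [projR_apply]
  rw [Pi.single_eq_of_ne (by simp)]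
  rfl

section Tensor

variable {d : ℕ} {ψ : (Fin d → ℝ) → ℝ}

lemma fderiv_tensor (hψ : Differentiable ℝ ψ) (x v : Fin (2 * d) → ℝ) :
    fderiv ℝ (fun x => ψ (projL d x) * ψ (projR d x)) x v =
      fderiv ℝ ψ (projL d x) (projL d v) * ψ (projR d x) +
      ψ (projL d x) * fderiv ℝ ψ (projR d x) (projR d v) := by
  have hA : HasFDerivAt (fun x => ψ (projL d x))
      ((fderiv ℝ ψ (projL d x)).comp (projL d)) x :=
    ((hψ _).hasFDerivAt).comp x (projL d).hasFDerivAt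
  have hB : HasFDerivAt (fun x => ψ (projR d x))
      ((fderiv ℝ ψ (projR d x)).comp (projR d)) x :=
    ((hψ _).hasFDerivAt).comp x (projR d).hasFDerivAt
  have h := (hA.mul hB).fderiv
  rw [show (fun x => ψ (projL d x) * ψ (projR d x))
      = (fun x => ψ (projL d x)) * (fun x => ψ (projR d x)) from rfl, h]
  simp only [ContinuousLinearMap.add_apply, ContinuousLinearMap.smul_apply,
    ContinuousLinearMap.comp_apply, smul_eq_mul]
  ring

lemma gradNormSq_tensor (hψ : Differentiable ℝ ψ) (x : Fin (2 * d) → ℝ) :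
    gradNormSq (fun x => ψ (projL d x) * ψ (projR d x)) x =
      gradNormSq ψ (projL d x) * ψ (projR d x) ^ 2 +
      ψ (projL d x) ^ 2 * gradNormSq ψ (projR d x) := by
  unfold gradNormSq
  rw [← Equiv.sum_comp (sigmaE d)
    (fun j => (fderiv ℝ (fun x => ψ (projL d x) * ψ (projR d x)) x (Pi.single j 1)) ^ 2),
    Fintype.sum_sum_type]
  have hl : ∀ i : Fin d,
      (fderiv ℝ (fun x => ψ (projL d x) * ψ (projR d x)) x (Pi.single (sigmaE d (Sum.inl i)) 1)) ^ 2
        = (fderiv ℝ ψ (projL d x) (Pi.single i 1)) ^ 2 * ψ (projR d x) ^ 2 := by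
    intro i
    rw [fderiv_tensor hψ, projL_single_inl, projR_single_inl]
    simp [mul_pow]
  have hr : ∀ i : Fin d,
      (fderiv ℝ (fun x => ψ (projL d x) * ψ (projR d x)) x (Pi.single (sigmaE d (Sum.inr i)) 1)) ^ 2
        = ψ (projL d x) ^ 2 * (fderiv ℝ ψ (projR d x) (Pi.single i 1)) ^ 2 := by
    intro i
    rw [fderiv_tensor hψ, projL_single_inr, projR_single_inr]
    simp [mul_pow]
  simp only [hl, hr]
  rw [← Finset.sum_mul, ← Finset.mul_sum]

lemma tensor_mem {d : ℕ} {p : ℝ} (hp : 0 < p) {E : ℝ} (hE : E ∈ chiSet d p) :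
    2 * E ∈ chiSet (2 * d) p := by
  obtain ⟨ψ, hdiff, hInt2, hIntG, hIntP, hN2, hNP, rfl⟩ := hE
  set Ψ : (Fin (2 * d) → ℝ) → ℝ := fun x => ψ (projL d x) * ψ (projR d x) with hΨ
  have hpres := eqvE_measurePreserving d
  have hemb := (eqvE d).measurableEmbedding
  have hint : ∀ f : (Fin (2 * d) → ℝ) → ℝ, (∫ x, f x) = ∫ yz, f (eqvE d yz) :=
    fun f => (hpres.integral_comp' f).symm
  have hintg : ∀ f : (Fin (2 * d) → ℝ) → ℝ,
      Integrable (fun yz => f (eqvE d yz)) → Integrable f := by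
    intro f hf
    exact (hpres.integrable_comp_emb hemb).mp hf
  -- compositions
  have hcomp2 : ∀ yz : (Fin d → ℝ) × (Fin d → ℝ), Ψ (eqvE d yz) = ψ yz.1 * ψ yz.2 := by
    intro yz; rw [hΨ]; simp only [projL_eqvE, projR_eqvE]
  refine ⟨Ψ, ?_, ?_, ?_, ?_, ?_, ?_, ?_⟩
  · exact ((hdiff.comp (projL d).differentiable)).mul (hdiff.comp (projR d).differentiable)
  · apply hintg
    have : (fun yz : (Fin d → ℝ) × (Fin d → ℝ) => Ψ (eqvE d yz) ^ 2)
        = fun yz => (ψ yz.1 ^ 2) * (ψ yz.2 ^ 2) := by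
      funext yz; rw [hcomp2]; ring
    rw [this, Measure.volume_eq_prod]
    exact hInt2.mul_prod hInt2
  · apply hintg
    have : (fun yz : (Fin d → ℝ) × (Fin d → ℝ) => gradNormSq Ψ (eqvE d yz))
        = fun yz => gradNormSq ψ yz.1 * ψ yz.2 ^ 2 + ψ yz.1 ^ 2 * gradNormSq ψ yz.2 := by
      funext yz
      rw [hΨ, gradNormSq_tensor hdiff, projL_eqvE, projR_eqvE]
    rw [this, Measure.volume_eq_prod]
    exact (hIntG.mul_prod hInt2).add (hInt2.mul_prod hIntG)
  · apply hintg
    have : (fun yz : (Fin d → ℝ) × (Fin d → ℝ) => |Ψ (eqvE d yz)| ^ (2 * p))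
        = fun yz => |ψ yz.1| ^ (2 * p) * |ψ yz.2| ^ (2 * p) := by
      funext yz
      rw [hcomp2, abs_mul, Real.mul_rpow (abs_nonneg _) (abs_nonneg _)]
    rw [this, Measure.volume_eq_prod]
    exact hIntP.mul_prod hIntP
  · rw [hint]
    have : (fun yz : (Fin d → ℝ) × (Fin d → ℝ) => Ψ (eqvE d yz) ^ 2)
        = fun yz => (ψ yz.1 ^ 2) * (ψ yz.2 ^ 2) := by
      funext yz; rw [hcomp2]; ring
    show (∫ yz, Ψ (eqvE d yz) ^ 2) = 1
    rw [show (fun yz : (Fin d → ℝ) × (Fin d → ℝ) => Ψ (eqvE d yz) ^ 2)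
        = fun yz => (ψ yz.1 ^ 2) * (ψ yz.2 ^ 2) from this] at *
    rw [Measure.volume_eq_prod, integral_prod_mul (fun y => ψ y ^ 2) (fun z => ψ z ^ 2), hN2]
    norm_num
  · rw [hint]
    show (∫ yz, |Ψ (eqvE d yz)| ^ (2*p)) = 1
    rw [show (fun yz : (Fin d → ℝ) × (Fin d → ℝ) => |Ψ (eqvE d yz)| ^ (2*p))
        = fun yz => |ψ yz.1| ^ (2*p) * |ψ yz.2| ^ (2*p) by
      funext yz; rw [hcomp2, abs_mul, Real.mul_rpow (abs_nonneg _) (abs_nonneg _)]]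
    rw [Measure.volume_eq_prod,
      integral_prod_mul (fun y => |ψ y| ^ (2*p)) (fun z => |ψ z| ^ (2*p)), hNP]
    norm_num
  · rw [hint]
    show 2 * (1/2 * ∫ x, gradNormSq ψ x) = 1/2 * ∫ yz, gradNormSq Ψ (eqvE d yz)
    rw [show (fun yz : (Fin d → ℝ) × (Fin d → ℝ) => gradNormSq Ψ (eqvE d yz))
        = fun yz => gradNormSq ψ yz.1 * ψ yz.2 ^ 2 + ψ yz.1 ^ 2 * gradNormSq ψ yz.2 by
      funext yz; rw [hΨ, gradNormSq_tensor hdiff, projL_eqvE, projR_eqvE]]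
    rw [Measure.volume_eq_prod]
    rw [integral_add (hIntG.mul_prod hInt2) (hInt2.mul_prod hIntG),
      integral_prod_mul (fun y => gradNormSq ψ y) (fun z => ψ z ^ 2),
      integral_prod_mul (fun y => ψ y ^ 2) (fun z => gradNormSq ψ z), hN2]
    ring

end Tensor

/-! ### Nonemptiness of `chiSet` -/

open Function
lemma exists_ab {d : ℕ} {p c2 cp : ℝ} (hd : 0 < d) (hp : 0 < p) (hc2 : 0 < c2) (hcp : 0 < cp)
    (h1 : p = 1 → c2 = cp) :
    ∃ a b : ℝ, 0 < a ∧ 0 < b ∧ a ^ (2:ℝ) * c2 = b ^ (d:ℝ) ∧ a ^ (2*p) * cp = b ^ (d:ℝ) := by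
  obtain ⟨a, ha, key⟩ : ∃ a : ℝ, 0 < a ∧ a ^ (2*p) * cp = a ^ (2:ℝ) * c2 := by
    by_cases hp1 : p = 1
    · exact ⟨1, one_pos, by simp [hp1, h1 hp1]⟩
    · refine ⟨(c2 / cp) ^ (1/(2*p-2)), Real.rpow_pos_of_pos (div_pos hc2 hcp) _, ?_⟩
      have hne : 2*p - 2 ≠ 0 := by
        intro h; apply hp1; linarith [h]
      set a : ℝ := (c2 / cp) ^ (1/(2*p-2)) with ha_def
      have ha : 0 < a := Real.rpow_pos_of_pos (div_pos hc2 hcp) _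
      have hstep : a ^ (2*p-2 : ℝ) = c2 / cp := by
        rw [ha_def, ← Real.rpow_mul (div_pos hc2 hcp).le, one_div, inv_mul_cancel₀ hne,
          Real.rpow_one]
      have hsplit : a ^ (2*p : ℝ) = a ^ (2*p-2 : ℝ) * a ^ (2:ℝ) := by
        rw [← Real.rpow_add ha]; congr 1; ring
      rw [hsplit, hstep]
      field_simp
  refine ⟨a, (a ^ (2:ℝ) * c2) ^ (1/(d:ℝ)), ha, Real.rpow_pos_of_pos (by positivity) _, ?_, ?_⟩
  · rw [← Real.rpow_mul (by positivity), one_div, inv_mul_cancel₀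
      (by exact_mod_cast hd.ne' : (d:ℝ) ≠ 0), Real.rpow_one]
  · rw [key, ← Real.rpow_mul (by positivity), one_div, inv_mul_cancel₀
      (by exact_mod_cast hd.ne' : (d:ℝ) ≠ 0), Real.rpow_one]


lemma scale_integral {d : ℕ} (hd : 0 < d) {b : ℝ} (hb : 0 < b) (g : (Fin d → ℝ) → ℝ) :
    ∫ x, g (b • x) = (b ^ (d:ℝ))⁻¹ * ∫ y, g y := by
  have := Measure.integral_comp_smul_of_nonneg (μ := (volume : Measure (Fin d → ℝ))) g b
    (hR := hb.le)
  rw [this, Module.finrank_fintype_fun_eq_card, Fintype.card_fin, smul_eq_mul,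
    Real.rpow_natCast]

set_option maxHeartbeats 800000 in
lemma chiSet_nonempty_aux (d : ℕ) (hd : 0 < d) (p : ℝ) (hp : 0 < p) :
    ∃ ψ : (Fin d → ℝ) → ℝ, Differentiable ℝ ψ ∧
      Integrable (fun x => ψ x ^ 2) ∧ Integrable (gradNormSq ψ) ∧
      Integrable (fun x => |ψ x| ^ (2 * p)) ∧
      (∫ x, ψ x ^ 2) = 1 ∧ (∫ x, |ψ x| ^ (2 * p)) = 1 := by
  classical
  set f : ContDiffBump (0 : Fin d → ℝ) := ⟨1, 2, one_pos, one_lt_two⟩ with hf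
  -- integrability of powers of the bump
  have hfc : Continuous f := f.continuous
  have hfcs : HasCompactSupport f := f.hasCompactSupport
  have hcs2 : HasCompactSupport (fun x => (f x : ℝ) ^ 2) :=
    hfcs.comp_left (g := fun t : ℝ => t ^ 2) (by simp)
  have hcsp : HasCompactSupport (fun x => |(f x : ℝ)| ^ (2 * p)) :=
    hfcs.comp_left (g := fun t : ℝ => |t| ^ (2 * p))
      (by simp [Real.zero_rpow (by positivity : (2*p:ℝ) ≠ 0)])
  have hcont2 : Continuous (fun x => (f x : ℝ) ^ 2) := hfc.pow 2
  have hcontp : Continuous (fun x => |(f x : ℝ)| ^ (2 * p)) :=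
    hfc.abs.rpow_const (fun x => Or.inr (by positivity))
  have hint2 : Integrable (fun x => (f x : ℝ) ^ 2) :=
    hcont2.integrable_of_hasCompactSupport hcs2
  have hintp : Integrable (fun x => |(f x : ℝ)| ^ (2 * p)) :=
    hcontp.integrable_of_hasCompactSupport hcsp
  set c2 : ℝ := ∫ x, (f x : ℝ) ^ 2 with hc2def
  set cp : ℝ := ∫ x, |(f x : ℝ)| ^ (2 * p) with hcpdef
  have hsupp2 : support (fun x => (f x : ℝ) ^ 2) = Metric.ball 0 2 := by
    have : support (fun x => (f x : ℝ) ^ 2) = support f := by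
      ext x; simp [pow_eq_zero_iff]
    rw [this, f.support_eq]
  have hsuppp : support (fun x => |(f x : ℝ)| ^ (2 * p)) = Metric.ball 0 2 := by
    have : support (fun x => |(f x : ℝ)| ^ (2 * p)) = support f := by
      ext x
      simp only [mem_support, ne_eq]
      rw [Real.rpow_eq_zero (abs_nonneg _) (by positivity)]
      simp
    rw [this, f.support_eq]
  have hballpos : 0 < volume (Metric.ball (0 : Fin d → ℝ) 2) :=
    Metric.measure_ball_pos volume 0 two_pos
  have hc2 : 0 < c2 := by
    rw [hc2def, integral_pos_iff_support_of_nonneg_ae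
      (Filter.Eventually.of_forall fun x => by positivity) hint2, hsupp2]
    exact hballpos
  have hcp : 0 < cp := by
    rw [hcpdef, integral_pos_iff_support_of_nonneg_ae
      (Filter.Eventually.of_forall fun x => by positivity) hintp, hsuppp]
    exact hballpos
  have h1 : p = 1 → c2 = cp := by
    intro hp1
    rw [hc2def, hcpdef]
    congr 1
    funext x
    rw [hp1, mul_one, show ((2:ℝ)) = ((2:ℕ):ℝ) by norm_num, Real.rpow_natCast, sq_abs]
  obtain ⟨a, b, ha, hb, hab2, habp⟩ := exists_ab hd hp hc2 hcp h1
  set ψ : (Fin d → ℝ) → ℝ := fun x => a * f (b • x) with hψdef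
  have hcmp : ContDiff ℝ ((⊤ : ℕ∞) : WithTop ℕ∞) (fun x : Fin d → ℝ => (f (b • x) : ℝ)) := by
    have h := (f.contDiff (n := (⊤ : ℕ∞))).comp
      (contDiff_const_smul (F := Fin d → ℝ) b)
    simpa [Function.comp_def] using h
  have hsm : ContDiff ℝ ((⊤ : ℕ∞) : WithTop ℕ∞) ψ := contDiff_const.mul hcmp
  have hone : (1 : WithTop ℕ∞) ≤ ((⊤ : ℕ∞) : WithTop ℕ∞) := by
    exact_mod_cast le_top
  have hdiff : Differentiable ℝ ψ := hsm.differentiable (by simp)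
  have hψcont : Continuous ψ := hsm.continuous
  have hfderiv_cont : Continuous (fun x => fderiv ℝ ψ x) := hsm.continuous_fderiv (by simp)
  have hψc : HasCompactSupport ψ := by
    have h1' : HasCompactSupport (fun x : Fin d → ℝ => (f (b • x) : ℝ)) := by
      have := hfcs.comp_homeomorph (Homeomorph.smul (Units.mk0 b hb.ne'))
      exact this
    exact h1'.mono (fun x hx => right_ne_zero_of_mul hx)
  -- integrability of the four functions
  have hι2 : Integrable (fun x => ψ x ^ 2) := by
    have hcsψ : HasCompactSupport (fun x => ψ x ^ 2) :=
      hψc.comp_left (g := fun t : ℝ => t ^ 2) (by simp)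
    exact (hψcont.pow 2).integrable_of_hasCompactSupport hcsψ
  have hιp : Integrable (fun x => |ψ x| ^ (2 * p)) :=
    (hψcont.abs.rpow_const (fun x => Or.inr (by positivity))).integrable_of_hasCompactSupport
      (hψc.comp_left (g := fun t : ℝ => |t| ^ (2 * p))
        (by simp [Real.zero_rpow (by positivity : (2*p:ℝ) ≠ 0)]))
  have hGcont : Continuous (gradNormSq ψ) := by
    unfold gradNormSq
    exact continuous_finset_sum _ fun i _ => ((hfderiv_cont.clm_apply continuous_const).pow 2)
  have hGsupp : HasCompactSupport (gradNormSq ψ) := by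
    apply (hψc.fderiv ℝ).mono
    intro x hx
    rw [mem_support] at hx ⊢
    intro h0
    apply hx
    unfold gradNormSq
    simp [h0]
  have hιG : Integrable (gradNormSq ψ) := hGcont.integrable_of_hasCompactSupport hGsupp
  -- the two normalizations
  have hbdpos : (0:ℝ) < b ^ (d:ℝ) := Real.rpow_pos_of_pos hb _
  have hrw2 : (a:ℝ) ^ (2:ℕ) = a ^ (2:ℝ) := by
    rw [← Real.rpow_natCast]; norm_num
  have hval2 : (∫ x, ψ x ^ 2) = 1 := by
    have heq : (fun x => ψ x ^ 2) = fun x => a ^ (2:ℕ) * (fun y => (f y:ℝ) ^ 2) (b • x) := by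
      funext x; rw [hψdef]; ring
    rw [heq, MeasureTheory.integral_const_mul, scale_integral hd hb (fun y => (f y:ℝ) ^ 2), ← hc2def, hrw2,
      mul_comm ((b ^ (d:ℝ))⁻¹) c2, ← mul_assoc, hab2, mul_inv_cancel₀ hbdpos.ne']
  have hvalp : (∫ x, |ψ x| ^ (2 * p)) = 1 := by
    have heq : (fun x => |ψ x| ^ (2 * p))
        = fun x => a ^ (2*p) * (fun y => |(f y:ℝ)| ^ (2*p)) (b • x) := by
      funext x
      rw [hψdef]
      rw [abs_mul, abs_of_pos ha, Real.mul_rpow ha.le (abs_nonneg _)]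
    rw [heq, MeasureTheory.integral_const_mul, scale_integral hd hb (fun y => |(f y:ℝ)| ^ (2*p)), ← hcpdef,
      mul_comm ((b ^ (d:ℝ))⁻¹) cp, ← mul_assoc, habp, mul_inv_cancel₀ hbdpos.ne']
  exact ⟨ψ, hdiff, hι2, hιG, hιp, hval2, hvalp⟩

lemma chiSet_nonempty (d : ℕ) (hd : 0 < d) (p : ℝ) (hp : 0 < p) :
    (chiSet d p).Nonempty := by
  obtain ⟨ψ, h1, h2, h3, h4, h5, h6⟩ := chiSet_nonempty_aux d hd p hp
  exact ⟨_, ψ, h1, h2, h3, h4, h5, h6, rfl⟩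

/-! ### Main theorem -/

/-- `χ_{2d,p} ≤ 2 χ_{d,p}`. -/
theorem chi_double_dim_le (d : ℕ) (hd : 0 < d) (p : ℝ) (hp : 0 < p) :
    sInf (chiSet (2 * d) p) ≤ 2 * sInf (chiSet d p) := by
  have hne : (chiSet d p).Nonempty := chiSet_nonempty d hd p hp
  have hbdd : BddBelow (chiSet (2 * d) p) := ⟨0, fun E hE => chiSet_nonneg hE⟩
  have h2 : sInf (chiSet (2 * d) p) / 2 ≤ sInf (chiSet d p) := by
    apply le_csInf hne
    intro E hE
    have := csInf_le hbdd (tensor_mem hp hE)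
    linarith
  linarith
end

section
/- Let d ≥ 3 and p > 1 with d > 2p/(p-1) (equivalently p > d/(d-2)). Then χ_{d,p} = inf{ (1/2)‖∇ψ‖₂² : ψ ∈ H¹(ℝ^d), ‖ψ‖₂ = 1 = ‖ψ‖_{2p} } = 0. -/
open MeasureTheory

set_option maxHeartbeats 1000000

open Real Set

noncomputable def Qs (d : ℕ) (x : Fin d → ℝ) : ℝ := ∑ i, x i ^ 2

lemma Qs_nonneg {d : ℕ} (x : Fin d → ℝ) : 0 ≤ Qs d x :=
  Finset.sum_nonneg fun _ _ => sq_nonneg _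

lemma one_add_Qs_pos {d : ℕ} (x : Fin d → ℝ) : 0 < 1 + Qs d x := by
  have := Qs_nonneg x; linarith

lemma continuous_Qs {d : ℕ} : Continuous (Qs d) :=
  continuous_finset_sum _ fun i _ => (continuous_apply i).pow 2

lemma hasFDerivAt_Qs {d : ℕ} (x : Fin d → ℝ) :
    HasFDerivAt (Qs d)
      (∑ i, (2 * x i) • (ContinuousLinearMap.proj i : (Fin d → ℝ) →L[ℝ] ℝ)) x := by
  have : ∀ i : Fin d, HasFDerivAt (fun x : Fin d → ℝ => x i ^ 2)
      ((2 * x i) • (ContinuousLinearMap.proj i : (Fin d → ℝ) →L[ℝ] ℝ)) x := by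
    intro i
    have h := ((ContinuousLinearMap.proj i : (Fin d → ℝ) →L[ℝ] ℝ)).hasFDerivAt (x := x)
    simpa [pow_two, two_mul, add_smul] using h.fun_mul h
  exact HasFDerivAt.fun_sum (fun i (_ : i ∈ Finset.univ) => this i)

lemma Qs_eval {d : ℕ} (x : Fin d → ℝ) (j : Fin d) :
    (∑ i, (2 * x i) • (ContinuousLinearMap.proj i : (Fin d → ℝ) →L[ℝ] ℝ)) (Pi.single j 1)
      = 2 * x j := by
  simp [ContinuousLinearMap.sum_apply, Pi.single_apply, Finset.sum_ite_eq', mul_comm]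

noncomputable def phiF (d : ℕ) (t : ℝ) (x : Fin d → ℝ) : ℝ := (1 + Qs d x) ^ (-t)

lemma phiF_pos {d : ℕ} (t : ℝ) (x : Fin d → ℝ) : 0 < phiF d t x :=
  rpow_pos_of_pos (one_add_Qs_pos x) _

lemma hasFDerivAt_phiF {d : ℕ} (t : ℝ) (x : Fin d → ℝ) :
    HasFDerivAt (phiF d t)
      ((-t * (1 + Qs d x) ^ (-t - 1)) •
        (∑ i, (2 * x i) • (ContinuousLinearMap.proj i : (Fin d → ℝ) →L[ℝ] ℝ))) x := by
  have hQ : HasFDerivAt (fun x : Fin d → ℝ => 1 + Qs d x)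
      (∑ i, (2 * x i) • (ContinuousLinearMap.proj i : (Fin d → ℝ) →L[ℝ] ℝ)) x :=
    (hasFDerivAt_Qs x).const_add 1
  have hg : HasDerivAt (fun y : ℝ => y ^ (-t)) (-t * (1 + Qs d x) ^ (-t - 1)) (1 + Qs d x) :=
    Real.hasDerivAt_rpow_const (Or.inl (one_add_Qs_pos x).ne')
  exact hg.comp_hasFDerivAt x hQ

lemma differentiable_phiF {d : ℕ} (t : ℝ) : Differentiable ℝ (phiF d t) :=
  fun x => (hasFDerivAt_phiF t x).differentiableAt

lemma fderiv_phiF_single {d : ℕ} (t : ℝ) (x : Fin d → ℝ) (j : Fin d) :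
    fderiv ℝ (phiF d t) x (Pi.single j 1) = -t * (1 + Qs d x) ^ (-t - 1) * (2 * x j) := by
  rw [(hasFDerivAt_phiF t x).fderiv]
  simp only [ContinuousLinearMap.smul_apply, smul_eq_mul, Qs_eval]

lemma gradNormSq_phiF {d : ℕ} (t : ℝ) (x : Fin d → ℝ) :
    gradNormSq (phiF d t) x = (4 * t ^ 2) * ((1 + Qs d x) ^ (-(2*t+2)) * Qs d x) := by
  unfold gradNormSq
  have h2 : ((1 + Qs d x) ^ (-t - 1)) ^ 2 = (1 + Qs d x) ^ (-(2*t+2)) := by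
    rw [← Real.rpow_natCast ((1 + Qs d x) ^ (-t - 1)) 2, ← Real.rpow_mul (one_add_Qs_pos x).le]
    norm_num; ring_nf
  calc ∑ i, (fderiv ℝ (phiF d t) x (Pi.single i 1)) ^ 2
      = ∑ i, (-t * (1 + Qs d x) ^ (-t - 1) * (2 * x i)) ^ 2 := by
        simp_rw [fderiv_phiF_single]
    _ = (4 * t ^ 2) * ((1 + Qs d x) ^ (-(2*t+2)) * Qs d x) := by
        simp_rw [mul_pow, ← Finset.mul_sum]
        rw [h2]
        unfold Qs
        ring_nf

lemma norm_sq_le_Qs {d : ℕ} (x : Fin d → ℝ) : ‖x‖ ^ 2 ≤ Qs d x := by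
  have h1 : ‖x‖ ≤ Real.sqrt (Qs d x) := by
    rw [pi_norm_le_iff_of_nonneg (Real.sqrt_nonneg _)]
    intro i
    have : x i ^ 2 ≤ Qs d x :=
      Finset.single_le_sum (f := fun j => x j ^ 2) (fun j _ => sq_nonneg _) (Finset.mem_univ i)
    calc ‖x i‖ = Real.sqrt (x i ^ 2) := by
          rw [Real.sqrt_sq_eq_abs]; rfl
      _ ≤ Real.sqrt (Qs d x) := Real.sqrt_le_sqrt this
  calc ‖x‖ ^ 2 ≤ Real.sqrt (Qs d x) ^ 2 := pow_le_pow_left₀ (norm_nonneg _) h1 2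
    _ = Qs d x := Real.sq_sqrt (Qs_nonneg x)

lemma rpow_Qs_le {d : ℕ} {b : ℝ} (hb : 0 ≤ b) (x : Fin d → ℝ) :
    (1 + Qs d x) ^ (-b) ≤ (1 + ‖x‖ ^ 2) ^ (-b) := by
  apply Real.rpow_le_rpow_of_nonpos (by positivity) _ (neg_nonpos.mpr hb)
  have := norm_sq_le_Qs x; linarith

lemma integrable_rpow_Qs {d : ℕ} {b : ℝ} (hb : (d : ℝ) < 2 * b) :
    Integrable (fun x : Fin d → ℝ => (1 + Qs d x) ^ (-b)) := by
  have hb0 : 0 ≤ b := by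
    have : (0:ℝ) ≤ (d:ℝ) := Nat.cast_nonneg d
    linarith
  have hfin : ((Module.finrank ℝ (Fin d → ℝ) : ℝ)) < 2 * b := by
    rw [Module.finrank_fin_fun]; exact hb
  have hint := integrable_rpow_neg_one_add_norm_sq (μ := (volume : Measure (Fin d → ℝ))) hfin
  refine hint.mono' ?_ ?_
  · exact ((continuous_const.add continuous_Qs).rpow_const
      (fun x => Or.inl (one_add_Qs_pos x).ne')).aestronglyMeasurable
  · filter_upwards with x
    rw [Real.norm_of_nonneg (Real.rpow_nonneg (one_add_Qs_pos x).le _)]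
    have : -(2*b)/2 = -b := by ring
    rw [this] at hint ⊢
    exact rpow_Qs_le hb0 x

lemma integrable_rpow_Qs_mul {d : ℕ} {b : ℝ} (hb : (d : ℝ) + 2 < 2 * b) :
    Integrable (fun x : Fin d → ℝ => (1 + Qs d x) ^ (-b) * Qs d x) := by
  have hb0 : 0 ≤ b - 1 := by
    have : (0:ℝ) ≤ (d:ℝ) := Nat.cast_nonneg d
    linarith
  have hfin : ((Module.finrank ℝ (Fin d → ℝ) : ℝ)) < 2 * (b - 1) := by
    rw [Module.finrank_fin_fun]; linarith
  have hint := integrable_rpow_neg_one_add_norm_sq (μ := (volume : Measure (Fin d → ℝ))) hfin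
  refine hint.mono' ?_ ?_
  · exact (((continuous_const.add continuous_Qs).rpow_const
      (fun x => Or.inl (one_add_Qs_pos x).ne')).mul continuous_Qs).aestronglyMeasurable
  · filter_upwards with x
    have hx := one_add_Qs_pos x
    rw [Real.norm_of_nonneg (mul_nonneg (Real.rpow_nonneg hx.le _) (Qs_nonneg x))]
    have h1 : (1 + Qs d x) ^ (-b) * Qs d x ≤ (1 + Qs d x) ^ (-(b-1)) := by
      have : (1 + Qs d x) ^ (-(b-1)) = (1 + Qs d x) ^ (-b) * (1 + Qs d x) := by
        rw [← Real.rpow_add_one hx.ne']; ring_nf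
      rw [this]
      have := Qs_nonneg x
      have h2 : (0:ℝ) ≤ (1 + Qs d x) ^ (-b) := Real.rpow_nonneg hx.le _
      nlinarith
    have : -(2*(b-1))/2 = -(b-1) := by ring
    rw [this] at hint ⊢
    exact h1.trans (rpow_Qs_le hb0 x)

lemma differentiable_psi {d : ℕ} (t a lam : ℝ) :
    Differentiable ℝ (fun x : Fin d → ℝ => a * phiF d t (lam • x)) :=
  ((differentiable_phiF t).comp (differentiable_id.const_smul lam)).const_mul a

lemma fderiv_psi_single {d : ℕ} (t a lam : ℝ) (x : Fin d → ℝ) (j : Fin d) :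
    fderiv ℝ (fun x : Fin d → ℝ => a * phiF d t (lam • x)) x (Pi.single j 1)
      = (a * lam) * fderiv ℝ (phiF d t) (lam • x) (Pi.single j 1) := by
  have h1 : HasFDerivAt (phiF d t) (fderiv ℝ (phiF d t) (lam • x)) (lam • x) :=
    (differentiable_phiF t (lam • x)).hasFDerivAt
  have hs : HasFDerivAt (fun x : Fin d → ℝ => lam • x)
      (lam • ContinuousLinearMap.id ℝ (Fin d → ℝ)) x :=
    (hasFDerivAt_id x).const_smul lam
  have h2 := (h1.comp x hs).const_mul a
  have h2' : HasFDerivAt (fun x : Fin d → ℝ => a * phiF d t (lam • x))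
      (a • (fderiv ℝ (phiF d t) (lam • x)).comp (lam • ContinuousLinearMap.id ℝ (Fin d → ℝ))) x := h2
  rw [h2'.fderiv]
  simp only [ContinuousLinearMap.smul_apply, ContinuousLinearMap.coe_comp', Function.comp_apply,
    ContinuousLinearMap.coe_smul', Pi.smul_apply, ContinuousLinearMap.coe_id', id_eq,
    _root_.map_smul, smul_eq_mul]
  ring

lemma gradNormSq_psi {d : ℕ} (t a lam : ℝ) (x : Fin d → ℝ) :
    gradNormSq (fun x : Fin d → ℝ => a * phiF d t (lam • x)) x
      = (a * lam) ^ 2 * gradNormSq (phiF d t) (lam • x) := by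
  unfold gradNormSq
  simp_rw [fderiv_psi_single, mul_pow, Finset.mul_sum]

lemma pow_mul_rpow_eq {d : ℕ} (hd1 : 1 ≤ d) {t y : ℝ} (hy0 : 0 < y) :
    y ^ (d-1) * (y^2) ^ (-(2*t)) = y ^ ((d:ℝ) - 1 - 4*t) := by
  have e1 : (y^2 : ℝ) ^ (-(2*t)) = y ^ (-(4*t)) := by
    rw [← Real.rpow_natCast y 2, ← Real.rpow_mul hy0.le]
    ring_nf
  have e2 : y ^ (d-1) = y ^ ((d:ℝ)-1) := by
    rw [← Real.rpow_natCast y (d-1)]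
    congr 1
    push_cast [Nat.cast_sub hd1]
    ring
  rw [e1, e2, ← Real.rpow_add hy0]
  ring_nf

lemma intOn_weight {d : ℕ} (hd1 : 1 ≤ d) {t : ℝ} (hlo : (d:ℝ) < 4*t) :
    IntegrableOn (fun y : ℝ => y ^ (d-1) * (1+y^2) ^ (-(2*t))) (Ioi 0) := by
  have ht0 : 0 ≤ 2*t := by
    have : (0:ℝ) ≤ (d:ℝ) := Nat.cast_nonneg d
    linarith
  have hcont : Continuous (fun y : ℝ => y ^ (d-1) * (1+y^2) ^ (-(2*t))) :=
    (continuous_pow _).mul ((continuous_const.add (continuous_pow 2)).rpow_const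
      (fun y => Or.inl (show (1:ℝ) + y^2 ≠ 0 by positivity)))
  rw [← Ioc_union_Ioi_eq_Ioi (le_of_lt one_pos)]
  refine IntegrableOn.union (hcont.integrableOn_Ioc) ?_
  have hlt : (d:ℝ) - 1 - 4*t < -1 := by linarith
  refine (integrableOn_Ioi_rpow_of_lt hlt one_pos).mono' hcont.aestronglyMeasurable ?_
  filter_upwards [ae_restrict_mem measurableSet_Ioi] with y (hy : 1 < y)
  have hy0 : (0:ℝ) < y := lt_trans one_pos hy
  rw [Real.norm_of_nonneg (by positivity)]
  have h1 : (1+y^2) ^ (-(2*t)) ≤ (y^2) ^ (-(2*t)) :=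
    Real.rpow_le_rpow_of_nonpos (by positivity) (by linarith) (by linarith)
  calc y ^ (d-1) * (1+y^2) ^ (-(2*t)) ≤ y ^ (d-1) * (y^2) ^ (-(2*t)) :=
        mul_le_mul_of_nonneg_left h1 (by positivity)
    _ = y ^ ((d:ℝ) - 1 - 4*t) := pow_mul_rpow_eq hd1 hy0

lemma setIntegral_weight_lower {d : ℕ} (hd1 : 1 ≤ d) {t : ℝ} (hlo : (d:ℝ) < 4*t) :
    (2:ℝ)^(-(2*t)) * (4*t-d)⁻¹ ≤ ∫ y in Ioi (0:ℝ), y ^ (d-1) * (1+y^2) ^ (-(2*t)) := by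
  have ht0 : 0 ≤ 2*t := by
    have : (0:ℝ) ≤ (d:ℝ) := Nat.cast_nonneg d
    linarith
  have hlt : (d:ℝ) - 1 - 4*t < -1 := by linarith
  have hg : IntegrableOn (fun y : ℝ => (2:ℝ)^(-(2*t)) * y ^ ((d:ℝ)-1-4*t)) (Ioi 1) :=
    (integrableOn_Ioi_rpow_of_lt hlt one_pos).const_mul _
  have step1 : ∫ y in Ioi (1:ℝ), (2:ℝ)^(-(2*t)) * y ^ ((d:ℝ)-1-4*t)
      ≤ ∫ y in Ioi (1:ℝ), y ^ (d-1) * (1+y^2) ^ (-(2*t)) := by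
    refine setIntegral_mono_on hg ((intOn_weight hd1 hlo).mono_set (Ioi_subset_Ioi one_pos.le)) measurableSet_Ioi ?_
    intro y hy
    rw [mem_Ioi] at hy
    have hy0 : (0:ℝ) < y := lt_trans one_pos hy
    have h1 : (2:ℝ)^(-(2*t)) * (y^2) ^ (-(2*t)) ≤ (1+y^2) ^ (-(2*t)) := by
      rw [← Real.mul_rpow (by norm_num) (by positivity)]
      exact Real.rpow_le_rpow_of_nonpos (by positivity) (by nlinarith) (by linarith)
    calc (2:ℝ)^(-(2*t)) * y ^ ((d:ℝ)-1-4*t)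
        = y ^ (d-1) * ((2:ℝ)^(-(2*t)) * (y^2) ^ (-(2*t))) := by
          rw [← pow_mul_rpow_eq hd1 hy0]; ring
      _ ≤ y ^ (d-1) * (1+y^2) ^ (-(2*t)) := mul_le_mul_of_nonneg_left h1 (by positivity)
  have step2 : ∫ y in Ioi (1:ℝ), y ^ (d-1) * (1+y^2) ^ (-(2*t))
      ≤ ∫ y in Ioi (0:ℝ), y ^ (d-1) * (1+y^2) ^ (-(2*t)) := by
    refine setIntegral_mono_set (intOn_weight hd1 hlo) ?_ ?_
    · filter_upwards [ae_restrict_mem measurableSet_Ioi] with y (hy : 0 < y)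
      positivity
    · exact HasSubset.Subset.eventuallyLE (Ioi_subset_Ioi one_pos.le)
  have hval : ∫ y in Ioi (1:ℝ), (2:ℝ)^(-(2*t)) * y ^ ((d:ℝ)-1-4*t)
      = (2:ℝ)^(-(2*t)) * (4*t-d)⁻¹ := by
    rw [integral_const_mul, integral_Ioi_rpow_of_lt hlt one_pos, Real.one_rpow]
    have h1 : (4*t-(d:ℝ)) ≠ 0 := by intro h; rw [sub_eq_zero] at h; linarith
    have h2 : ((d:ℝ)-1-4*t+1) ≠ 0 := by intro h; linarith [hlo]
    field_simp
    ring_nf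
    rw [neg_inv]
    ring_nf
  linarith [step1, step2, hval.symm.le]

lemma Qs_le_card_norm {d : ℕ} (x : Fin d → ℝ) : Qs d x ≤ (d : ℝ) * ‖x‖ ^ 2 := by
  unfold Qs
  calc ∑ i, x i ^ 2 ≤ ∑ _i : Fin d, ‖x‖ ^ 2 := by
        apply Finset.sum_le_sum
        intro i _
        have h1 : |x i| ≤ ‖x‖ := by
          have := norm_le_pi_norm x i
          simpa using this
        calc x i ^ 2 = |x i| ^ 2 := (sq_abs _).symm
          _ ≤ ‖x‖ ^ 2 := pow_le_pow_left₀ (abs_nonneg _) h1 2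
    _ = (d : ℝ) * ‖x‖ ^ 2 := by
        simp [Finset.sum_const, nsmul_eq_mul]

lemma integral_rpow_Qs_pos {d : ℕ} {b : ℝ}
    (hint : Integrable (fun x : Fin d → ℝ => (1 + Qs d x) ^ (-b))) :
    0 < ∫ x : Fin d → ℝ, (1 + Qs d x) ^ (-b) := by
  rw [integral_pos_iff_support_of_nonneg
    (fun x => Real.rpow_nonneg (one_add_Qs_pos x).le _) hint]
  have hsupp : Function.support (fun x : Fin d → ℝ => (1 + Qs d x) ^ (-b)) = univ := by
    apply eq_univ_of_forall
    intro x
    exact (Real.rpow_pos_of_pos (one_add_Qs_pos x) _).ne'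
  rw [hsupp]
  exact isOpen_univ.measure_pos volume univ_nonempty

lemma integral_rpow_Qs_mono {d : ℕ} {b b' : ℝ} (hbb : b ≤ b')
    (hint : Integrable (fun x : Fin d → ℝ => (1 + Qs d x) ^ (-b)))
    (hint' : Integrable (fun x : Fin d → ℝ => (1 + Qs d x) ^ (-b'))) :
    ∫ x : Fin d → ℝ, (1 + Qs d x) ^ (-b') ≤ ∫ x : Fin d → ℝ, (1 + Qs d x) ^ (-b) := by
  apply integral_mono hint' hint
  intro x
  exact Real.rpow_le_rpow_of_exponent_le (by have := Qs_nonneg x; linarith) (neg_le_neg hbb)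

lemma integral_rpow_Qs_mul_mono {d : ℕ} {b b' : ℝ} (hbb : b ≤ b')
    (hint : Integrable (fun x : Fin d → ℝ => (1 + Qs d x) ^ (-b) * Qs d x))
    (hint' : Integrable (fun x : Fin d → ℝ => (1 + Qs d x) ^ (-b') * Qs d x)) :
    ∫ x : Fin d → ℝ, (1 + Qs d x) ^ (-b') * Qs d x
      ≤ ∫ x : Fin d → ℝ, (1 + Qs d x) ^ (-b) * Qs d x := by
  apply integral_mono hint' hint
  intro x
  apply mul_le_mul_of_nonneg_right _ (Qs_nonneg x)
  exact Real.rpow_le_rpow_of_exponent_le (by have := Qs_nonneg x; linarith) (neg_le_neg hbb)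

lemma A_lower {d : ℕ} (hd : 3 ≤ d) {t : ℝ} (hlo : (d:ℝ) < 4*t) (hhi : t ≤ (d:ℝ)/4+1) :
    (2*(1+(d:ℝ)))^(-((d:ℝ)/2+2)) * ((d:ℝ) * (volume (Metric.ball (0:Fin d → ℝ) 1)).toReal)
        * (4*t-(d:ℝ))⁻¹
      ≤ ∫ x : Fin d → ℝ, (1 + Qs d x) ^ (-(2*t)) := by
  haveI : Nonempty (Fin d) := ⟨⟨0, by omega⟩⟩
  have hd1 : 1 ≤ d := by omega
  have ht0 : 0 ≤ 2*t := by
    have : (0:ℝ) ≤ (d:ℝ) := Nat.cast_nonneg d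
    linarith
  set volB := (volume (Metric.ball (0:Fin d → ℝ) 1)).toReal with hvolB
  have hvolB0 : 0 ≤ volB := ENNReal.toReal_nonneg
  -- integrability of the radial comparison function
  have hfin : ((Module.finrank ℝ (Fin d → ℝ) : ℝ)) < 2 * (2*t) := by
    rw [Module.finrank_fin_fun]; linarith
  have hint2 := integrable_rpow_neg_one_add_norm_sq (μ := (volume : Measure (Fin d → ℝ))) hfin
  have hexp : -(2*(2*t))/2 = -(2*t) := by ring
  rw [hexp] at hint2
  -- pointwise comparison
  have hpt : ∀ x : Fin d → ℝ,
      (1+(d:ℝ))^(-(2*t)) * (1 + ‖x‖^2) ^ (-(2*t)) ≤ (1 + Qs d x) ^ (-(2*t)) := by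
    intro x
    rw [← Real.mul_rpow (by positivity) (by positivity)]
    apply Real.rpow_le_rpow_of_nonpos (one_add_Qs_pos x) _ (by linarith)
    have h1 := Qs_le_card_norm x
    have h2 : (0:ℝ) ≤ ‖x‖^2 := sq_nonneg _
    have h3 : (0:ℝ) ≤ (d:ℝ) := Nat.cast_nonneg d
    nlinarith
  have hmono : ∫ x : Fin d → ℝ, (1+(d:ℝ))^(-(2*t)) * (1 + ‖x‖^2) ^ (-(2*t))
      ≤ ∫ x : Fin d → ℝ, (1 + Qs d x) ^ (-(2*t)) :=
    integral_mono (hint2.const_mul _) (integrable_rpow_Qs (by linarith)) hpt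
  have hpolar : ∫ x : Fin d → ℝ, (1 + ‖x‖^2) ^ (-(2*t))
      = (d : ℝ) * volB * ∫ y in Ioi (0:ℝ), y ^ (d-1) * (1+y^2) ^ (-(2*t)) := by
    have h := MeasureTheory.integral_fun_norm_addHaar (volume : Measure (Fin d → ℝ))
      (fun y : ℝ => (1+y^2) ^ (-(2*t)))
    rw [Module.finrank_fin_fun] at h
    rw [h]
    simp only [nsmul_eq_mul, smul_eq_mul, hvolB, measureReal_def]
    ring
  have hconstmul : ∫ x : Fin d → ℝ, (1+(d:ℝ))^(-(2*t)) * (1 + ‖x‖^2) ^ (-(2*t))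
      = (1+(d:ℝ))^(-(2*t)) * ∫ x : Fin d → ℝ, (1 + ‖x‖^2) ^ (-(2*t)) :=
    integral_const_mul _ _
  have hweight := setIntegral_weight_lower hd1 hlo
  have hKt : (2*(1+(d:ℝ)))^(-((d:ℝ)/2+2)) ≤ (1+(d:ℝ))^(-(2*t)) * (2:ℝ)^(-(2*t)) := by
    rw [← Real.mul_rpow (by positivity) (by norm_num), mul_comm (1+(d:ℝ)) 2]
    apply Real.rpow_le_rpow_of_exponent_le
    · have h3 : (0:ℝ) ≤ (d:ℝ) := Nat.cast_nonneg d
      nlinarith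
    · linarith
  have hδ : (0:ℝ) < 4*t-(d:ℝ) := by linarith
  have hδinv : (0:ℝ) ≤ (4*t-(d:ℝ))⁻¹ := by positivity
  have h2t : (0:ℝ) ≤ (2:ℝ)^(-(2*t)) := Real.rpow_nonneg (by norm_num) _
  have h1d : (0:ℝ) ≤ (1+(d:ℝ))^(-(2*t)) := Real.rpow_nonneg (by positivity) _
  have hKt0 : (0:ℝ) ≤ (2*(1+(d:ℝ)))^(-((d:ℝ)/2+2)) := Real.rpow_nonneg (by positivity) _
  calc (2*(1+(d:ℝ)))^(-((d:ℝ)/2+2)) * ((d:ℝ) * volB) * (4*t-(d:ℝ))⁻¹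
      ≤ ((1+(d:ℝ))^(-(2*t)) * (2:ℝ)^(-(2*t))) * ((d:ℝ) * volB) * (4*t-(d:ℝ))⁻¹ := by
        apply mul_le_mul_of_nonneg_right (mul_le_mul_of_nonneg_right hKt (by positivity)) hδinv
    _ = (1+(d:ℝ))^(-(2*t)) * ((d:ℝ) * volB * ((2:ℝ)^(-(2*t)) * (4*t-(d:ℝ))⁻¹)) := by ring
    _ ≤ (1+(d:ℝ))^(-(2*t)) * ((d:ℝ) * volB * ∫ y in Ioi (0:ℝ), y ^ (d-1) * (1+y^2) ^ (-(2*t))) := by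
        apply mul_le_mul_of_nonneg_left _ h1d
        apply mul_le_mul_of_nonneg_left hweight (by positivity)
    _ = ∫ x : Fin d → ℝ, (1+(d:ℝ))^(-(2*t)) * (1 + ‖x‖^2) ^ (-(2*t)) := by
        rw [hconstmul, hpolar]
    _ ≤ ∫ x : Fin d → ℝ, (1 + Qs d x) ^ (-(2*t)) := hmono

noncomputable def b0c (d : ℕ) (p : ℝ) : ℝ :=
  ∫ x : Fin d → ℝ, (1 + Qs d x) ^ (-(2*p*((d:ℝ)/4+1)))

noncomputable def c1c (d : ℕ) : ℝ :=
  4*((d:ℝ)/4+1)^2 * ∫ x : Fin d → ℝ, (1 + Qs d x) ^ (-((d:ℝ)/2+2)) * Qs d x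

noncomputable def Kc (d : ℕ) : ℝ :=
  (2*(1+(d:ℝ)))^(-((d:ℝ)/2+2)) * ((d:ℝ) * (volume (Metric.ball (0:Fin d → ℝ) 1)).toReal)

noncomputable def Mc (d : ℕ) (p : ℝ) : ℝ :=
  (1/2) * c1c d / (b0c d p) ^ (2*(p-1)⁻¹/(d:ℝ)) * (Kc d) ^ ((2*p)/((d:ℝ)*(p-1)) - 1)

lemma Kc_pos {d : ℕ} (hd : 3 ≤ d) : 0 < Kc d := by
  unfold Kc
  have h1 : (0:ℝ) < (2*(1+(d:ℝ)))^(-((d:ℝ)/2+2)) := Real.rpow_pos_of_pos (by positivity) _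
  have h2 : (0:ℝ) < (d:ℝ) := by
    have : (3:ℝ) ≤ (d:ℝ) := by exact_mod_cast hd
    linarith
  have h3 : (0:ℝ) < (volume (Metric.ball (0:Fin d → ℝ) 1)).toReal := by
    apply ENNReal.toReal_pos
    · exact (Metric.measure_ball_pos volume 0 one_pos).ne'
    · exact measure_ball_lt_top.ne
  positivity

lemma construction (d : ℕ) (hd : 3 ≤ d) (p : ℝ) (hp : 1 < p)
    (hpd : (d : ℝ) > 2 * p / (p - 1))
    {δ : ℝ} (hδ0 : 0 < δ) (hδ1 : δ ≤ 1) :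
    ∃ E ∈ chiSet d p, 0 ≤ E ∧
      E ≤ Mc d p * δ ^ (1 - (2*p)/((d:ℝ)*(p-1))) := by
  have hd0 : (0:ℝ) < (d:ℝ) := by
    have : (3:ℝ) ≤ (d:ℝ) := by exact_mod_cast hd
    linarith
  have hp1 : (0:ℝ) < p - 1 := by linarith
  set t : ℝ := ((d:ℝ)+δ)/4 with ht_def
  have h4t : 4*t - (d:ℝ) = δ := by rw [ht_def]; ring
  have hlo : (d:ℝ) < 4*t := by linarith
  have hhi : t ≤ (d:ℝ)/4+1 := by rw [ht_def]; linarith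
  have ht0 : 0 < t := by rw [ht_def]; linarith
  -- the basic integrals
  set A : ℝ := ∫ x : Fin d → ℝ, (1 + Qs d x) ^ (-(2*t)) with hA_def
  set B : ℝ := ∫ x : Fin d → ℝ, (1 + Qs d x) ^ (-(2*p*t)) with hB_def
  set CI : ℝ := ∫ x : Fin d → ℝ, (1 + Qs d x) ^ (-(2*t+2)) * Qs d x with hCI_def
  have hAint : Integrable (fun x : Fin d → ℝ => (1 + Qs d x) ^ (-(2*t))) :=
    integrable_rpow_Qs (by linarith)
  have hBint : Integrable (fun x : Fin d → ℝ => (1 + Qs d x) ^ (-(2*p*t))) :=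
    integrable_rpow_Qs (by nlinarith)
  have hCint : Integrable (fun x : Fin d → ℝ => (1 + Qs d x) ^ (-(2*t+2)) * Qs d x) :=
    integrable_rpow_Qs_mul (by linarith)
  have hA : 0 < A := integral_rpow_Qs_pos hAint
  have hB : 0 < B := integral_rpow_Qs_pos hBint
  have hCI0 : 0 ≤ CI := integral_nonneg fun x =>
    mul_nonneg (Real.rpow_nonneg (one_add_Qs_pos x).le _) (Qs_nonneg x)
  -- parameters
  set a2 : ℝ := (A/B) ^ ((p-1)⁻¹) with ha2_def
  have ha2 : 0 < a2 := Real.rpow_pos_of_pos (by positivity) _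
  set a : ℝ := Real.sqrt a2 with ha_def
  have ha : 0 < a := Real.sqrt_pos.mpr ha2
  have hasq : a ^ 2 = a2 := Real.sq_sqrt ha2.le
  set X : ℝ := a2 * A with hX_def
  have hX : 0 < X := mul_pos ha2 hA
  set lam : ℝ := X ^ ((d:ℝ)⁻¹) with hlam_def
  have hlam : 0 < lam := Real.rpow_pos_of_pos hX _
  have hlamd : lam ^ d = X := by
    rw [hlam_def, ← Real.rpow_natCast (X ^ ((d:ℝ)⁻¹)) d, ← Real.rpow_mul hX.le,
      inv_mul_cancel₀ hd0.ne', Real.rpow_one]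
  have hlam2 : lam ^ 2 = X ^ (2/(d:ℝ)) := by
    rw [hlam_def, ← Real.rpow_natCast (X ^ ((d:ℝ)⁻¹)) 2, ← Real.rpow_mul hX.le]
    congr 1
    push_cast
    ring
  -- the test function
  set ψ : (Fin d → ℝ) → ℝ := fun x => a * phiF d t (lam • x) with hψ_def
  have hψ_pos : ∀ x, 0 < ψ x := fun x => mul_pos ha (phiF_pos t _)
  -- pointwise identities
  have hsq : (fun x => ψ x ^ 2) = fun x => a2 * (1 + Qs d (lam • x)) ^ (-(2*t)) := by
    funext x
    rw [hψ_def]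
    simp only
    rw [mul_pow, hasq]
    congr 1
    unfold phiF
    rw [← Real.rpow_natCast ((1 + Qs d (lam • x)) ^ (-t)) 2,
      ← Real.rpow_mul (one_add_Qs_pos (lam • x)).le]
    congr 1
    push_cast
    ring
  have habs : (fun x => |ψ x| ^ (2*p)) = fun x => a2 ^ p * (1 + Qs d (lam • x)) ^ (-(2*p*t)) := by
    funext x
    rw [abs_of_pos (hψ_pos x), hψ_def]
    simp only
    unfold phiF
    rw [Real.mul_rpow ha.le (Real.rpow_nonneg (one_add_Qs_pos (lam • x)).le _)]
    congr 1
    · rw [Real.rpow_mul ha.le, show ((2:ℝ)) = ((2:ℕ):ℝ) by norm_num, Real.rpow_natCast, hasq]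
    · rw [← Real.rpow_mul (one_add_Qs_pos (lam • x)).le]
      congr 1
      ring
  have hgrad : gradNormSq ψ = fun x =>
      (a2 * lam ^ 2) * ((4*t^2) * ((1 + Qs d (lam • x)) ^ (-(2*t+2)) * Qs d (lam • x))) := by
    funext x
    rw [hψ_def]
    rw [show gradNormSq (fun x => a * phiF d t (lam • x)) x
        = (a*lam)^2 * gradNormSq (phiF d t) (lam • x) from gradNormSq_psi t a lam x,
      gradNormSq_phiF]
    rw [mul_pow, hasq]
  -- integration against the scaling
  have hcomp : ∀ g : (Fin d → ℝ) → ℝ, ∫ x : Fin d → ℝ, g (lam • x) = (lam^d)⁻¹ * ∫ x, g x := by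
    intro g
    have h := Measure.integral_comp_smul_of_nonneg (volume : Measure (Fin d → ℝ)) g lam
      (hR := hlam.le)
    rw [Module.finrank_fin_fun] at h
    simpa [smul_eq_mul] using h
  -- the three integrability statements
  have int1 : Integrable (fun x => ψ x ^ 2) := by
    rw [hsq]
    exact (hAint.comp_smul hlam.ne').const_mul a2
  have int2 : Integrable (fun x => |ψ x| ^ (2*p)) := by
    rw [habs]
    exact (hBint.comp_smul hlam.ne').const_mul _
  have int3 : Integrable (gradNormSq ψ) := by
    rw [hgrad]
    exact ((hCint.comp_smul hlam.ne').const_mul _).const_mul _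
  -- the three integrals
  have hI1 : (∫ x, ψ x ^ 2) = 1 := by
    rw [hsq, integral_const_mul, hcomp (fun y => (1 + Qs d y) ^ (-(2*t))), hlamd, ← hA_def, hX_def]
    field_simp
  have hI2 : (∫ x, |ψ x| ^ (2*p)) = 1 := by
    have ha2p : a2 ^ p = a2 * (A/B) := by
      have h1 : a2 ^ (p-1) = A/B := by
        rw [ha2_def, ← Real.rpow_mul (by positivity : (0:ℝ) ≤ A/B),
          inv_mul_cancel₀ (sub_ne_zero.mpr hp.ne'), Real.rpow_one]
      calc a2 ^ p = a2 ^ (p-1+1) := by ring_nf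
        _ = a2 ^ (p-1) * a2 ^ (1:ℝ) := Real.rpow_add ha2 _ _
        _ = (A/B) * a2 := by rw [h1, Real.rpow_one]
        _ = a2 * (A/B) := mul_comm _ _
    rw [habs, integral_const_mul, hcomp (fun y => (1 + Qs d y) ^ (-(2*p*t))), hlamd, ← hB_def,
      hX_def, ha2p]
    field_simp
  have hI3 : (∫ x, gradNormSq ψ x) = (a2 * lam ^ 2) * ((4*t^2) * ((lam^d)⁻¹ * CI)) := by
    rw [hgrad]
    rw [integral_const_mul, integral_const_mul,
      hcomp (fun y => (1 + Qs d y) ^ (-(2*t+2)) * Qs d y), ← hCI_def]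
  refine ⟨(1/2) * ∫ x, gradNormSq ψ x,
    ⟨ψ, differentiable_psi t a lam, int1, int3, int2, hI1, hI2, rfl⟩, ?_, ?_⟩
  · apply mul_nonneg (by norm_num)
    apply integral_nonneg
    intro x
    exact Finset.sum_nonneg fun i _ => sq_nonneg _
  · -- the quantitative bound
    have hE : (1/2) * ∫ x, gradNormSq ψ x = lam^2 * ((4*t^2) * CI) / (2*A) := by
      rw [hI3, hlamd, hX_def]
      field_simp
    -- comparison constants
    have haux1 : (d:ℝ) < 2*(2*p*((d:ℝ)/4+1)) := by
      have h1 : 2*(2*p*((d:ℝ)/4+1)) = p*((d:ℝ)+4) := by ring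
      have h2 : (d:ℝ) + 4 ≤ p*((d:ℝ)+4) := le_mul_of_one_le_left (by linarith) hp.le
      linarith
    have haux2 : 2*p*t ≤ 2*p*((d:ℝ)/4+1) :=
      mul_le_mul_of_nonneg_left hhi (by linarith : (0:ℝ) ≤ 2*p)
    have hb0int : Integrable (fun x : Fin d → ℝ => (1 + Qs d x) ^ (-(2*p*((d:ℝ)/4+1)))) :=
      integrable_rpow_Qs haux1
    have hb0 : 0 < b0c d p := integral_rpow_Qs_pos hb0int
    have hB_ge : b0c d p ≤ B :=
      integral_rpow_Qs_mono haux2 hBint hb0int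
    have hc1int : Integrable (fun x : Fin d → ℝ => (1 + Qs d x) ^ (-((d:ℝ)/2+2)) * Qs d x) :=
      integrable_rpow_Qs_mul (by linarith)
    set c1i : ℝ := ∫ x : Fin d → ℝ, (1 + Qs d x) ^ (-((d:ℝ)/2+2)) * Qs d x with hc1i_def
    have hCI_le : CI ≤ c1i := integral_rpow_Qs_mul_mono (by linarith) hc1int hCint
    have hc1i0 : 0 ≤ c1i := integral_nonneg fun x =>
      mul_nonneg (Real.rpow_nonneg (one_add_Qs_pos x).le _) (Qs_nonneg x)
    set r : ℝ := (p-1)⁻¹ with hr_def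
    have hr0 : 0 ≤ r := by positivity
    set X' : ℝ := (A/(b0c d p)) ^ r * A with hX'_def
    have hX' : 0 < X' := mul_pos (Real.rpow_pos_of_pos (by positivity) _) hA
    have hXle : X ≤ X' := by
      rw [hX_def, hX'_def, ha2_def]
      apply mul_le_mul_of_nonneg_right _ hA.le
      exact Real.rpow_le_rpow (by positivity) (by gcongr) hr0
    have hlam2' : lam^2 ≤ X'^(2/(d:ℝ)) := by
      rw [hlam2]
      exact Real.rpow_le_rpow hX.le hXle (by positivity)
    have ht_sq : 4*t^2 ≤ 4*((d:ℝ)/4+1)^2 := by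
      have h1 : t^2 ≤ ((d:ℝ)/4+1)^2 := pow_le_pow_left₀ ht0.le hhi 2
      linarith
    -- first bound
    have step1 : (1/2) * ∫ x, gradNormSq ψ x
        ≤ X'^(2/(d:ℝ)) * (4*((d:ℝ)/4+1)^2 * c1i) / (2*A) := by
      rw [hE]
      gcongr <;> first
        | exact hlam2'
        | exact ht_sq
        | exact hCI_le
        | exact hc1i0
        | exact hCI0
        | positivity
    -- rewrite the middle expression
    set e : ℝ := (r+1)*(2/(d:ℝ)) - 1 with he_def
    have hmid : X'^(2/(d:ℝ)) * (4*((d:ℝ)/4+1)^2 * c1i) / (2*A)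
        = ((1/2) * c1c d / (b0c d p) ^ (r*(2/(d:ℝ)))) * A ^ e := by
      have h1 : X' = A^(r+1) / (b0c d p)^r := by
        rw [hX'_def, Real.div_rpow hA.le hb0.le, Real.rpow_add_one hA.ne' r]
        ring
      have h2 : X'^(2/(d:ℝ)) = A^((r+1)*(2/(d:ℝ))) / (b0c d p)^(r*(2/(d:ℝ))) := by
        rw [h1, Real.div_rpow (Real.rpow_nonneg hA.le _) (Real.rpow_nonneg hb0.le _),
          ← Real.rpow_mul hA.le, ← Real.rpow_mul hb0.le]
      have h3 : A ^ e = A^((r+1)*(2/(d:ℝ))) / A := by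
        rw [he_def, Real.rpow_sub hA, Real.rpow_one]
      rw [h2, h3]
      unfold c1c
      rw [← hc1i_def]
      field_simp
    -- exponent is negative
    have hpd' : 2*p < (d:ℝ)*(p-1) := by
      rw [gt_iff_lt, div_lt_iff₀ hp1] at hpd
      linarith
    have he_eq : e = (2*p)/((d:ℝ)*(p-1)) - 1 := by
      rw [he_def, hr_def]
      field_simp
      ring
    have he_neg : e < 0 := by
      rw [he_eq]
      have : (2*p)/((d:ℝ)*(p-1)) < 1 := by
        rw [div_lt_one (by positivity)]
        exact hpd'
      linarith
    -- lower bound on A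
    have hA_ge : Kc d * δ⁻¹ ≤ A := by
      have h := A_lower hd hlo hhi
      rw [h4t] at h
      exact h
    have hKc := Kc_pos hd
    have hAe : A ^ e ≤ (Kc d)^e * δ^(-e) := by
      have h1 : A ^ e ≤ (Kc d * δ⁻¹) ^ e :=
        Real.rpow_le_rpow_of_nonpos (by positivity) hA_ge he_neg.le
      rw [Real.mul_rpow hKc.le (by positivity), Real.inv_rpow hδ0.le,
        ← Real.rpow_neg hδ0.le] at h1
      exact h1
    -- final assembly
    have hfac : 0 ≤ (1/2) * c1c d / (b0c d p) ^ (r*(2/(d:ℝ))) := by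
      have : 0 ≤ c1c d := by
        unfold c1c
        rw [← hc1i_def]
        positivity
      positivity
    calc (1/2) * ∫ x, gradNormSq ψ x
        ≤ X'^(2/(d:ℝ)) * (4*((d:ℝ)/4+1)^2 * c1i) / (2*A) := step1
      _ = ((1/2) * c1c d / (b0c d p) ^ (r*(2/(d:ℝ)))) * A ^ e := hmid
      _ ≤ ((1/2) * c1c d / (b0c d p) ^ (r*(2/(d:ℝ)))) * ((Kc d)^e * δ^(-e)) :=
          mul_le_mul_of_nonneg_left hAe hfac
      _ = Mc d p * δ ^ (1 - (2*p)/((d:ℝ)*(p-1))) := by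
          unfold Mc
          rw [show r*(2/(d:ℝ)) = 2*(p-1)⁻¹/(d:ℝ) by rw [hr_def]; ring,
            show -e = 1 - (2*p)/((d:ℝ)*(p-1)) by rw [he_eq]; ring,
            ← he_eq]
          rw [he_eq]
          ring

lemma b0c_nonneg (d : ℕ) (p : ℝ) : 0 ≤ b0c d p :=
  integral_nonneg fun x => Real.rpow_nonneg (one_add_Qs_pos x).le _

lemma c1c_nonneg (d : ℕ) : 0 ≤ c1c d := by
  unfold c1c
  apply mul_nonneg (by positivity)
  exact integral_nonneg fun x =>
    mul_nonneg (Real.rpow_nonneg (one_add_Qs_pos x).le _) (Qs_nonneg x)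

lemma Mc_nonneg (d : ℕ) (hd : 3 ≤ d) (p : ℝ) : 0 ≤ Mc d p := by
  unfold Mc
  apply mul_nonneg
  · apply div_nonneg
    · have := c1c_nonneg d; linarith
    · exact Real.rpow_nonneg (b0c_nonneg d p) _
  · exact Real.rpow_nonneg (Kc_pos hd).le _

/-- For `d ≥ 3` and `p > 1` with `d > 2p/(p-1)` (i.e. `p > d/(d-2)`), `χ_{d,p} = 0`. -/
theorem chi_eq_zero (d : ℕ) (hd : 3 ≤ d) (p : ℝ) (hp : 1 < p)
    (hpd : (d : ℝ) > 2 * p / (p - 1)) :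
    sInf (chiSet d p) = 0 := by
  have hd0 : (0:ℝ) < (d:ℝ) := by
    have : (3:ℝ) ≤ (d:ℝ) := by exact_mod_cast hd
    linarith
  have hp1 : (0:ℝ) < p - 1 := by linarith
  set κ : ℝ := 1 - (2*p)/((d:ℝ)*(p-1)) with hκ_def
  have hκ0 : 0 < κ := by
    have hpd' : 2*p < (d:ℝ)*(p-1) := by
      rw [gt_iff_lt, div_lt_iff₀ hp1] at hpd
      linarith
    have : (2*p)/((d:ℝ)*(p-1)) < 1 := by
      rw [div_lt_one (by positivity)]
      exact hpd'
    rw [hκ_def]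
    linarith
  have hnonneg : ∀ E ∈ chiSet d p, 0 ≤ E := by
    rintro E ⟨ψ, _, _, hint, _, _, _, rfl⟩
    apply mul_nonneg (by norm_num)
    exact integral_nonneg fun x => Finset.sum_nonneg fun i _ => sq_nonneg _
  obtain ⟨E₀, hE₀, _, _⟩ := construction d hd p hp hpd one_pos le_rfl
  have hne : (chiSet d p).Nonempty := ⟨E₀, hE₀⟩
  have hbdd : BddBelow (chiSet d p) := ⟨0, fun E hE => hnonneg E hE⟩
  have h1 : 0 ≤ sInf (chiSet d p) := le_csInf hne hnonneg
  have hM0 : 0 ≤ Mc d p := Mc_nonneg d hd p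
  have hM1 : (0:ℝ) < Mc d p + 1 := by linarith
  have h2 : ∀ ε > (0:ℝ), sInf (chiSet d p) < ε := by
    intro ε hε
    set δ : ℝ := min 1 ((ε/(Mc d p + 1)) ^ κ⁻¹) with hδ_def
    have hδ0 : 0 < δ := lt_min one_pos (Real.rpow_pos_of_pos (div_pos hε hM1) _)
    have hδ1 : δ ≤ 1 := min_le_left _ _
    obtain ⟨E, hEmem, hE0, hEle⟩ := construction d hd p hp hpd hδ0 hδ1
    have hδκ : δ ^ κ ≤ ε/(Mc d p + 1) := by
      calc δ ^ κ ≤ ((ε/(Mc d p + 1)) ^ κ⁻¹) ^ κ :=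
            Real.rpow_le_rpow hδ0.le (min_le_right _ _) hκ0.le
        _ = ε/(Mc d p + 1) := by
            rw [← Real.rpow_mul (by positivity), inv_mul_cancel₀ hκ0.ne', Real.rpow_one]
    have hEε : E < ε := by
      have hle : E ≤ Mc d p * (ε/(Mc d p + 1)) :=
        le_trans hEle (mul_le_mul_of_nonneg_left hδκ hM0)
      have hlt : Mc d p * (ε/(Mc d p + 1)) < ε := by
        rw [mul_div_assoc', div_lt_iff₀ hM1]
        nlinarith
      linarith
    exact lt_of_le_of_lt (csInf_le hbdd hEmem) hEε
  refine le_antisymm ?_ h1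
  by_contra h
  push_neg at h
  exact absurd (h2 _ h) (lt_irrefl _)
end
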